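/- If f ∈ BMO(𝕋) and sup_{n∈ℤ} ‖e_n f‖_{BMO(𝕋)} ≤ C < ∞, where e_n(x) = e^{2πinx}, then f ∈ L^∞(𝕋) with ‖f‖_∞ ≤ 2C. -/

import Mathlib

open Real MeasureTheory Topology Filter

private lemma norm_exp_two_pi_int (n : ℤ) (t : ℝ) :
    ‖Complex.exp (2 * π * Complex.I * n * t)‖ = 1 := by
  have h : (2 * (π : ℂ) * Complex.I * n * t) = ((2 * π * n * t : ℝ) : ℂ) * Complex.I := by
    push_cast; ring
  rw [h, Complex.norm_exp_ofReal_mul_I]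

private lemma key_average_bound
    (f : ℝ → ℂ)
    (hloc : LocallyIntegrable f volume) (C : ℝ)
    (hbmo : ∀ (n : ℤ) (a b : ℝ), a < b → b - a < 1 →
      (b - a)⁻¹ * ∫ x in a..b,
          ‖f x * Complex.exp (2 * π * Complex.I * n * x) -
            (b - a)⁻¹ • ∫ y in a..b, f y * Complex.exp (2 * π * Complex.I * n * y)‖ ≤ C)
    (a b : ℝ) (hab : a < b) (h1 : b - a < 1) :
    (b - a)⁻¹ * ∫ x in a..b, ‖f x‖ ≤ C := by
  have hba : (0:ℝ) < b - a := by linarith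
  -- integrability of f on the interval
  have hfab : IntegrableOn f (Set.Ioc a b) volume :=
    (hloc.integrableOn_isCompact isCompact_Icc).mono_set Set.Ioc_subset_Icc_self
  set F : ℝ → ℂ := (Set.Ioc a b).indicator f with hF
  have hFi : Integrable F volume := hfab.integrable_indicator measurableSet_Ioc
  -- the modulated averages
  set c : ℤ → ℂ := fun n => (b - a)⁻¹ • ∫ y in a..b, f y * Complex.exp (2 * π * Complex.I * n * y)
    with hc
  -- step 1: for each n, the average of ‖f‖ is bounded by C + ‖c n‖
  have step1 : ∀ n : ℤ, (b - a)⁻¹ * (∫ x in a..b, ‖f x‖) ≤ C + ‖c n‖ := by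
    intro n
    set g : ℝ → ℂ := fun x => f x * Complex.exp (2 * π * Complex.I * n * x) with hg
    have hgI : IntervalIntegrable g volume a b := by
      rw [intervalIntegrable_iff_integrableOn_Ioc_of_le hab.le]
      have hcont : Continuous fun x : ℝ => Complex.exp (2 * π * Complex.I * n * x) := by
        exact Complex.continuous_exp.comp (by continuity)
      have hbdd : ∃ K : ℝ, ∀ x : ℝ, ‖Complex.exp (2 * π * Complex.I * (n : ℂ) * (x : ℂ))‖ ≤ K :=
        ⟨1, fun x => le_of_eq (norm_exp_two_pi_int n x)⟩
      have : Integrable (fun x : ℝ => Complex.exp (2 * π * Complex.I * n * x) * f x)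
          (volume.restrict (Set.Ioc a b)) :=
        hfab.bdd_mul hcont.aestronglyMeasurable (ae_of_all _ fun x => le_of_eq (norm_exp_two_pi_int n x))
      exact this.congr (Filter.Eventually.of_forall fun x => mul_comm _ _)
    have hsubI : IntervalIntegrable (fun x => ‖g x - c n‖) volume a b :=
      (hgI.sub (intervalIntegrable_const)).norm
    have heq : (∫ x in a..b, ‖f x‖) = ∫ x in a..b, ‖g x‖ := by
      refine intervalIntegral.integral_congr fun x _ => ?_
      rw [hg]; simp only [norm_mul, norm_exp_two_pi_int, mul_one]
    have hmono : (∫ x in a..b, ‖g x‖) ≤ ∫ x in a..b, (‖g x - c n‖ + ‖c n‖) := by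
      refine intervalIntegral.integral_mono_on hab.le hgI.norm
        (hsubI.add intervalIntegrable_const) fun x _ => ?_
      calc ‖g x‖ = ‖(g x - c n) + c n‖ := by ring_nf
        _ ≤ ‖g x - c n‖ + ‖c n‖ := norm_add_le _ _
    have hadd : (∫ x in a..b, (‖g x - c n‖ + ‖c n‖))
        = (∫ x in a..b, ‖g x - c n‖) + (b - a) * ‖c n‖ := by
      rw [intervalIntegral.integral_add hsubI intervalIntegrable_const,
        intervalIntegral.integral_const, smul_eq_mul]
    have hb := hbmo n a b hab h1
    have : (b - a)⁻¹ * (∫ x in a..b, ‖f x‖)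
        ≤ (b - a)⁻¹ * ((∫ x in a..b, ‖g x - c n‖) + (b - a) * ‖c n‖) := by
      rw [heq]
      exact mul_le_mul_of_nonneg_left (hadd ▸ hmono) (inv_nonneg.2 hba.le)
    refine this.trans ?_
    have h2 : (b - a)⁻¹ * ((b - a) * ‖c n‖) = ‖c n‖ := by
      field_simp
    rw [mul_add, h2]
    exact add_le_add_left hb _
  -- step 2: c (-m) tends to 0 along m : ℕ (Riemann–Lebesgue)
  have hcF : ∀ m : ℕ, c (-(m : ℤ)) = (b - a)⁻¹ • FourierTransform.fourier F (m : ℝ) := by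
    intro m
    have hmain : (∫ y in a..b, f y * Complex.exp (2 * π * Complex.I * ((-(m : ℤ) : ℤ) : ℂ) * y))
        = FourierTransform.fourier F (m : ℝ) := by
      rw [Real.fourier_real_eq_integral_exp_smul,
        intervalIntegral.integral_of_le hab.le]
      have hpt : (fun v : ℝ => Complex.exp (↑(-2 * π * v * (m : ℝ)) * Complex.I) • F v)
          = (Set.Ioc a b).indicator
            (fun y => f y * Complex.exp (2 * π * Complex.I * ((-(m : ℤ) : ℤ) : ℂ) * y)) := by
        funext v
        by_cases hv : v ∈ Set.Ioc a b
        · rw [hF]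
          simp only [Set.indicator_of_mem hv, smul_eq_mul]
          rw [mul_comm]
          congr 2
          push_cast; ring
        · rw [hF]
          simp [Set.indicator_of_notMem hv]
      rw [hpt, MeasureTheory.integral_indicator measurableSet_Ioc]
    rw [hc]
    simp only [Int.cast_neg, Int.cast_natCast] at hmain ⊢
    rw [hmain]
  have hnat : Filter.Tendsto (fun m : ℕ => (m : ℝ)) Filter.atTop (Filter.cocompact ℝ) := by
    rw [cocompact_eq_atBot_atTop]
    exact tendsto_natCast_atTop_atTop.mono_right le_sup_right
  have hRL : Filter.Tendsto (fun m : ℕ => FourierTransform.fourier F (m : ℝ)) Filter.atTop (𝓝 0) :=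
    (Real.zero_at_infty_fourier F).comp hnat
  have hlim : Filter.Tendsto (fun m : ℕ => C + ‖c (-(m : ℤ))‖) Filter.atTop (𝓝 (C + 0)) := by
    refine Filter.Tendsto.const_add C ?_
    have : Filter.Tendsto (fun m : ℕ => ‖(b - a)⁻¹ • FourierTransform.fourier F (m : ℝ)‖)
        Filter.atTop (𝓝 0) := by
      simpa using (hRL.const_smul ((b - a)⁻¹ : ℝ)).norm
    refine this.congr fun m => ?_
    rw [hcF m]
  have := ge_of_tendsto' hlim fun m => step1 (-(m : ℤ))
  linarith

/-- If `f` is a 1-periodic locally integrable function and the functions `e_n f`,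
`e_n(x) = e^{2πinx}`, have BMO norms bounded by `C` uniformly in `n ∈ ℤ`, then
`f ∈ L^∞` with `‖f‖_∞ ≤ 2C`. -/
theorem bmo_modulation_bounded_implies_Linfty
    (f : ℝ → ℂ) (hper : ∀ x, f (x + 1) = f x)
    (hloc : LocallyIntegrable f volume) (C : ℝ)
    (hbmo : ∀ (n : ℤ) (a b : ℝ), a < b → b - a < 1 →
      (b - a)⁻¹ * ∫ x in a..b,
          ‖f x * Complex.exp (2 * π * Complex.I * n * x) -
            (b - a)⁻¹ • ∫ y in a..b, f y * Complex.exp (2 * π * Complex.I * n * y)‖ ≤ C) :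
    ∀ᵐ x : ℝ, ‖f x‖ ≤ 2 * C := by
  have key := key_average_bound f hloc C hbmo
  have hC : 0 ≤ C := by
    have h := key 0 (1/2) (by norm_num) (by norm_num)
    have hnn : 0 ≤ ((1:ℝ)/2 - 0)⁻¹ * ∫ x in (0:ℝ)..(1/2), ‖f x‖ := by
      apply mul_nonneg (by norm_num)
      exact intervalIntegral.integral_nonneg (by norm_num) fun x _ => norm_nonneg _
    linarith
  -- Lebesgue differentiation
  have hdiff := IsUnifLocDoublingMeasure.ae_tendsto_average (μ := volume) hloc 1
  filter_upwards [hdiff] with x hx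
  have hmem : ∀ᶠ r in nhdsWithin 0 (Set.Ioi (0:ℝ)),
      x ∈ Metric.closedBall x (1 * r) := by
    filter_upwards [self_mem_nhdsWithin] with r hr
    simp only [one_mul, Metric.mem_closedBall, dist_self]
    exact le_of_lt hr
  have htend : Filter.Tendsto (fun r : ℝ => ⨍ y in Metric.closedBall x r, f y)
      (nhdsWithin 0 (Set.Ioi (0:ℝ))) (𝓝 (f x)) :=
    hx (fun _ => x) id tendsto_id hmem
  have htendn : Filter.Tendsto (fun r : ℝ => ‖⨍ y in Metric.closedBall x r, f y‖)
      (nhdsWithin 0 (Set.Ioi (0:ℝ))) (𝓝 ‖f x‖) := htend.norm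
  have hbound : ∀ᶠ r in nhdsWithin 0 (Set.Ioi (0:ℝ)),
      ‖⨍ y in Metric.closedBall x r, f y‖ ≤ C := by
    filter_upwards [Ioo_mem_nhdsGT_of_mem (Set.mem_Ico.2 ⟨le_refl 0, by norm_num⟩ :
      (0:ℝ) ∈ Set.Ico 0 (1/4))] with r hr
    obtain ⟨hr0, hr4⟩ := hr
    have havg : (⨍ y in Metric.closedBall x r, f y)
        = ((x + r) - (x - r))⁻¹ • ∫ y in (x - r)..(x + r), f y := by
      rw [setAverage_eq, Real.volume_real_closedBall (by linarith), Real.closedBall_eq_Icc,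
        MeasureTheory.integral_Icc_eq_integral_Ioc,
        ← intervalIntegral.integral_of_le (by linarith : x - r ≤ x + r)]
      congr 1
      ring_nf
    rw [havg]
    have hab : x - r < x + r := by linarith
    have h1 : (x + r) - (x - r) < 1 := by linarith
    have hpos : (0:ℝ) < (x + r) - (x - r) := by linarith
    calc ‖((x + r) - (x - r))⁻¹ • ∫ y in (x - r)..(x + r), f y‖
        = ((x + r) - (x - r))⁻¹ * ‖∫ y in (x - r)..(x + r), f y‖ := by
          rw [norm_smul, Real.norm_eq_abs, abs_of_pos (by positivity)]
      _ ≤ ((x + r) - (x - r))⁻¹ * ∫ y in (x - r)..(x + r), ‖f y‖ := by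
          apply mul_le_mul_of_nonneg_left _ (inv_nonneg.2 hpos.le)
          exact intervalIntegral.norm_integral_le_integral_norm hab.le
      _ ≤ C := key (x - r) (x + r) hab h1
  have := le_of_tendsto htendn hbound
  linarith
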